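/- The support of any projected Mather measure is contained in the projected Aubry set A = { y ∈ M : h(y,y) = 0 }. -/

import Mathlib

open MeasureTheory Filter Topology ProbabilityTheory
open scoped ENNReal

/-- The minimal cost over chains of length `n` from `x` to `y`. -/
noncomputable def minChainCost {M : Type*} (c : M × M → ℝ) (n : ℕ) (x y : M) : ℝ :=
  sInf {r : ℝ | ∃ p : ℕ → M, p 0 = x ∧ p n = y ∧
    r = ∑ i ∈ Finset.range n, c (p i, p (i + 1))}

/-- The Peierls barrier `h(x, y) = liminf_n c_n(x, y)` (critical value `0`). -/
noncomputable def peierls {M : Type*} (c : M × M → ℝ) (x y : M) : ℝ :=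
  Filter.liminf (fun n => minChainCost c n x y) Filter.atTop

section PathMeasures

variable {M : Type*} [MeasurableSpace M]

/-- Glue a path and a new point: coordinates `≤ m` come from the path, the rest are the
new point. -/
def glueFn (M : Type*) (m : ℕ) : ((ℕ → M) × M) → ℕ → M :=
  fun p i => if i ≤ m then p.1 i else p.2

lemma measurable_glueFn (m : ℕ) : Measurable (glueFn M m) := by
  apply measurable_pi_lambda
  intro i
  by_cases h : i ≤ m
  · simp only [glueFn, h, if_true]
    exact (measurable_pi_apply i).comp measurable_fst
  · simpa [glueFn, h] using measurable_snd

/-- Finite-horizon Markov path measures: the law of `(X_0, X_1, ..., X_m, X_m, X_m, ...)`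
for a Markov chain with initial law `μ` and transition kernel `κ`, as a measure on `ℕ → M`. -/
noncomputable def pathM (μ : Measure M) (κ : Kernel M M) : ℕ → Measure (ℕ → M)
  | 0 => μ.map (fun x _ => x)
  | (m + 1) => ((pathM μ κ m) ⊗ₘ (κ.comap (fun ω => ω m) (measurable_pi_apply m))).map
      (glueFn M m)

lemma pathM_prob (μ : Measure M) [IsProbabilityMeasure μ] (κ : Kernel M M) [IsMarkovKernel κ] :
    ∀ m, IsProbabilityMeasure (pathM μ κ m) := by
  intro m
  induction m with
  | zero =>
    rw [pathM]
    exact Measure.isProbabilityMeasure_map (measurable_pi_lambda _ fun _ => measurable_id).aemeasurable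
  | succ m ih =>
    rw [pathM]
    haveI := ih
    exact Measure.isProbabilityMeasure_map (measurable_glueFn m).aemeasurable

lemma map_prodMap_compProd_comap {α γ β : Type*} [MeasurableSpace α] [MeasurableSpace β]
    [MeasurableSpace γ] (ρ : Measure α) [IsProbabilityMeasure ρ] {g : α → γ}
    (hg : Measurable g) (κ : Kernel γ β) [IsMarkovKernel κ] :
    (ρ ⊗ₘ κ.comap g hg).map (Prod.map g id) = (ρ.map g) ⊗ₘ κ := by
  haveI : IsProbabilityMeasure (ρ.map g) := Measure.isProbabilityMeasure_map hg.aemeasurable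
  ext s hs
  rw [Measure.map_apply (hg.prodMap measurable_id) hs,
    Measure.compProd_apply ((hg.prodMap measurable_id) hs),
    Measure.compProd_apply hs, lintegral_map (Kernel.measurable_kernel_prodMk_left hs) hg]
  refine lintegral_congr fun a => ?_
  rw [Kernel.comap_apply]
  rfl

lemma pathM_facts (μ : Measure M) [IsProbabilityMeasure μ] (κ : Kernel M M) [IsMarkovKernel κ]
    (hsnd : (μ ⊗ₘ κ).map Prod.snd = μ) :
    ∀ m, (∀ i, i < m → (pathM μ κ m).map (fun ω => (ω i, ω (i + 1))) = μ ⊗ₘ κ) ∧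
      (pathM μ κ m).map (fun ω => ω m) = μ := by
  intro m
  induction m with
  | zero =>
    refine ⟨fun i h => absurd h (Nat.not_lt_zero i), ?_⟩
    have hconst : Measurable (fun (x : M) (_ : ℕ) => x) :=
      measurable_pi_lambda _ fun _ => measurable_id
    rw [pathM, Measure.map_map (measurable_pi_apply 0) hconst]
    have hcomp : ((fun ω : ℕ → M => ω 0) ∘ (fun (x : M) (_ : ℕ) => x)) = id := rfl
    rw [hcomp, Measure.map_id]
  | succ m ih =>
    haveI : IsProbabilityMeasure (pathM μ κ m) := pathM_prob μ κ m
    have hglue := measurable_glueFn (M := M) m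
    have hpair : ∀ i : ℕ, Measurable (fun ω : ℕ → M => (ω i, ω (i + 1))) :=
      fun i => (measurable_pi_apply i).prodMk (measurable_pi_apply (i + 1))
    have hfstC : ((pathM μ κ m) ⊗ₘ (κ.comap (fun ω => ω m) (measurable_pi_apply m))).map
        Prod.fst = pathM μ κ m := by
      rw [show ((pathM μ κ m) ⊗ₘ (κ.comap (fun ω => ω m) (measurable_pi_apply m))).map Prod.fst
        = ((pathM μ κ m) ⊗ₘ (κ.comap (fun ω => ω m) (measurable_pi_apply m))).fst from rfl,
        Measure.fst_compProd]
    have hpairm : ((pathM μ κ (m + 1))).map (fun ω => (ω m, ω (m + 1))) = μ ⊗ₘ κ := by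
      rw [pathM, Measure.map_map (hpair m) hglue]
      have hc : (fun ω : ℕ → M => (ω m, ω (m + 1))) ∘ glueFn M m
          = Prod.map (fun ω : ℕ → M => ω m) id := by
        funext p
        simp [glueFn, Prod.map, Nat.le_refl]
      rw [hc, map_prodMap_compProd_comap _ _ _, ih.2]
    constructor
    · intro i hi
      rcases Nat.lt_succ_iff_lt_or_eq.mp hi with hi' | rfl
      · rw [pathM, Measure.map_map (hpair i) hglue]
        have hc : (fun ω : ℕ → M => (ω i, ω (i + 1))) ∘ glueFn M m
            = (fun ω : ℕ → M => (ω i, ω (i + 1))) ∘ Prod.fst := by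
          funext p
          simp [glueFn, Nat.le_of_lt hi', Nat.succ_le_of_lt hi']
        rw [hc, ← Measure.map_map (hpair i) measurable_fst]
        rw [show ((pathM μ κ m) ⊗ₘ (κ.comap (fun ω => ω m) (measurable_pi_apply m))).map Prod.fst
          = pathM μ κ m from hfstC, ih.1 i hi']
      · exact hpairm
    · have hev : (fun ω : ℕ → M => ω (m + 1)) = Prod.snd ∘ (fun ω : ℕ → M => (ω m, ω (m + 1))) :=
        rfl
      rw [hev, ← Measure.map_map measurable_snd (hpair m), hpairm, hsnd]

lemma pathM_marginal (μ : Measure M) [IsProbabilityMeasure μ] (κ : Kernel M M) [IsMarkovKernel κ]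
    (hsnd : (μ ⊗ₘ κ).map Prod.snd = μ) (hfst : (μ ⊗ₘ κ).map Prod.fst = μ)
    (m : ℕ) : ∀ i ≤ m, (pathM μ κ m).map (fun ω => ω i) = μ := by
  intro i hi
  rcases Nat.lt_or_ge i m with hi' | hi'
  · have hev : (fun ω : ℕ → M => ω i) = Prod.fst ∘ (fun ω : ℕ → M => (ω i, ω (i + 1))) := rfl
    have hpairm : Measurable (fun ω : ℕ → M => (ω i, ω (i + 1))) :=
      (measurable_pi_apply i).prodMk (measurable_pi_apply (i + 1))
    rw [hev, ← Measure.map_map measurable_fst hpairm, (pathM_facts μ κ hsnd m).1 i hi', hfst]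
  · have h : i = m := le_antisymm hi hi'
    rw [h]
    exact (pathM_facts μ κ hsnd m).2

end PathMeasures

/-- Poincaré-style recurrence: if `μt` is a probability measure on `M × M` with equal marginals,
concentrated on a set `S`, and `B` has positive marginal measure, then there are arbitrarily
long chains of `S`-steps starting and ending in `B`. -/
lemma exists_return_chain
    {M : Type*} [MetricSpace M] [CompactSpace M] [Nonempty M]
    [MeasurableSpace M] [BorelSpace M]
    (μt : Measure (M × M)) [IsProbabilityMeasure μt]
    (hclosed : μt.map Prod.fst = μt.map Prod.snd)
    (S : Set (M × M)) (hSm : MeasurableSet S) (hS0 : μt Sᶜ = 0)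
    (B : Set M) (hBm : MeasurableSet B) (hB : μt.map Prod.fst B ≠ 0)
    (N : ℕ) (hN : 1 ≤ N) :
    ∃ n, N ≤ n ∧ ∃ q : ℕ → M, q 0 ∈ B ∧ q n ∈ B ∧ ∀ t, t < n → (q t, q (t + 1)) ∈ S := by
  set μ : Measure M := μt.map Prod.fst with hμdef
  haveI : IsProbabilityMeasure μ := Measure.isProbabilityMeasure_map measurable_fst.aemeasurable
  set κ := μt.condKernel with hκdef
  have hdis : μ ⊗ₘ κ = μt := by
    have : μt.fst = μ := rfl
    rw [← this]
    exact μt.disintegrate _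
  have hsnd : (μ ⊗ₘ κ).map Prod.snd = μ := by rw [hdis, ← hclosed]
  have hfst : (μ ⊗ₘ κ).map Prod.fst = μ := by rw [hdis]
  by_contra hcon
  push_neg at hcon
  -- hcon : ∀ n, N ≤ n → ∀ q, q 0 ∈ B → q n ∈ B → ∃ t < n, (q t, q (t+1)) ∉ S
  set β := μ B with hβdef
  have hβ0 : β ≠ 0 := hB
  have hβtop : β ≠ ⊤ := measure_ne_top μ B
  obtain ⟨K, hK⟩ := ENNReal.exists_nat_gt (ENNReal.inv_lt_top.mpr (pos_iff_ne_zero.mpr hβ0)).ne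
  have hKβ : 1 < (K : ℝ≥0∞) * β := by
    rw [← ENNReal.div_lt_iff (Or.inl hβ0) (Or.inl hβtop)]
    simpa [one_div] using hK
  set m := K * N with hmdef
  haveI : IsProbabilityMeasure (pathM μ κ m) := pathM_prob μ κ m
  set ρ := pathM μ κ m with hρdef
  have hmarg : ∀ i ≤ m, ρ.map (fun ω => ω i) = μ := pathM_marginal μ κ hsnd hfst m
  have hpairρ : ∀ i < m, ρ.map (fun ω => (ω i, ω (i + 1))) = μt := by
    intro i hi
    rw [hρdef, (pathM_facts μ κ hsnd m).1 i hi, hdis]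
  set E : ℕ → Set (ℕ → M) := fun j => (fun ω => ω (j * N)) ⁻¹' B with hEdef
  have hEm : ∀ j, MeasurableSet (E j) := fun j => hBm.preimage (measurable_pi_apply _)
  have hEβ : ∀ j < K, ρ (E j) = β := by
    intro j hj
    have hle : j * N ≤ m := Nat.mul_le_mul_right N hj.le
    rw [hEdef]
    rw [← Measure.map_apply (measurable_pi_apply (j * N)) hBm, hmarg (j * N) hle]
  -- the bad set (some adjacent pair not in S) is null
  have hGc : ρ (⋃ t ∈ Set.Iio m, (fun ω : ℕ → M => (ω t, ω (t + 1))) ⁻¹' Sᶜ) = 0 := by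
    rw [measure_biUnion_null_iff (Set.to_countable (Set.Iio m))]
    intro t ht
    rw [← Measure.map_apply ((measurable_pi_apply t).prodMk (measurable_pi_apply (t + 1)))
      hSm.compl, hpairρ t (Set.mem_Iio.mp ht)]
    exact hS0
  -- pairwise intersections at distinct multiple-of-N times are null
  have hint : ∀ j i, j < i → i < K → ρ (E j ∩ E i) = 0 := by
    intro j i hji hiK
    refine measure_mono_null ?_ hGc
    intro ω hω
    have hij1 : 1 ≤ i - j := by omega
    have hNle : N ≤ (i - j) * N := by
      calc N = 1 * N := (one_mul N).symm
      _ ≤ (i - j) * N := Nat.mul_le_mul_right N hij1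
    have harith : j * N + (i - j) * N = i * N := by
      rw [← Nat.add_mul, Nat.add_sub_cancel' hji.le]
    obtain ⟨t, htn, hnotS⟩ := hcon ((i - j) * N) hNle (fun s => ω (j * N + s))
      (hω.1) (show ω (j * N + (i - j) * N) ∈ B by rw [harith]; exact hω.2)
    have htm : j * N + t < m := by
      have h1 : j * N + t < j * N + (i - j) * N := Nat.add_lt_add_left htn _
      rw [harith] at h1
      exact lt_of_lt_of_le h1 (Nat.mul_le_mul_right N hiK.le)
    refine Set.mem_biUnion (Set.mem_Iio.mpr htm) ?_
    exact hnotS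
  set A : ℕ → Set (ℕ → M) := fun j => E j \ ⋃ i ∈ Set.Ico (j + 1) K, E i with hAdef
  have hAm : ∀ j, MeasurableSet (A j) := fun j =>
    (hEm j).diff (MeasurableSet.biUnion (Set.to_countable _) fun i _ => hEm i)
  have hAβ : ∀ j < K, ρ (A j) = β := by
    intro j hj
    have h1 : ρ (E j ∩ ⋃ i ∈ Set.Ico (j + 1) K, E i) = 0 := by
      rw [Set.inter_iUnion₂, measure_biUnion_null_iff (Set.to_countable _)]
      intro i hi
      have hi' := Set.mem_Ico.mp hi
      exact hint j i (by omega) hi'.2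
    have h2 : A j = E j \ (E j ∩ ⋃ i ∈ Set.Ico (j + 1) K, E i) := by
      rw [hAdef]
      ext ω
      simp only [Set.mem_diff, Set.mem_inter_iff]
      tauto
    rw [h2, measure_diff_null h1]
    exact hEβ j hj
  have hdisj : (↑(Finset.range K) : Set ℕ).PairwiseDisjoint A := by
    intro a ha b hb hab
    simp only [Finset.coe_range, Set.mem_Iio] at ha hb
    rcases hab.lt_or_gt with h | h
    · refine Set.disjoint_left.mpr fun ω hωa hωb => ?_
      exact hωa.2 (Set.mem_biUnion (Set.mem_Ico.mpr ⟨by omega, hb⟩) hωb.1)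
    · refine Set.disjoint_left.mpr fun ω hωa hωb => ?_
      exact hωb.2 (Set.mem_biUnion (Set.mem_Ico.mpr ⟨by omega, ha⟩) hωa.1)
  have hsum : ∑ j ∈ Finset.range K, ρ (A j) = ρ (⋃ j ∈ Finset.range K, A j) :=
    (measure_biUnion_finset hdisj fun b _ => hAm b).symm
  have hfinal : (K : ℝ≥0∞) * β ≤ 1 := by
    calc (K : ℝ≥0∞) * β = ∑ _j ∈ Finset.range K, β := by
          rw [Finset.sum_const, Finset.card_range, nsmul_eq_mul]
      _ = ∑ j ∈ Finset.range K, ρ (A j) :=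
          Finset.sum_congr rfl fun j hj => (hAβ j (Finset.mem_range.mp hj)).symm
      _ = ρ (⋃ j ∈ Finset.range K, A j) := hsum
      _ ≤ 1 := prob_le_one
  exact absurd hfinal (not_le.mpr hKβ)

/-- The support of any projected Mather measure is contained in the projected Aubry
set `A = { y : h(y, y) = 0 }`: any point all of whose neighbourhoods have positive
measure belongs to `A`. -/
theorem support_projected_mather_subset_aubry
    {M : Type*} [MetricSpace M] [CompactSpace M] [Nonempty M]
    [MeasurableSpace M] [BorelSpace M]
    (c : M × M → ℝ) (hc : Continuous c)
    (hcrit : ∃ v : C(M, ℝ), ∀ x : M, v x = ⨅ y : M, (v y + c (y, x)))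
    (μt : Measure (M × M)) [IsProbabilityMeasure μt]
    (hclosed : μt.map Prod.fst = μt.map Prod.snd)
    (hMather : ∫ z, c z ∂μt = 0) :
    ∀ x : M, (∀ U ∈ 𝓝 x, (μt.map Prod.fst) U ≠ 0) → peierls c x x = 0 := by
  intro x hx
  obtain ⟨v, hv⟩ := hcrit
  set f : M × M → ℝ := fun z => v z.1 + c z - v z.2 with hfdef
  have hfc : Continuous f :=
    ((v.continuous.comp continuous_fst).add hc).sub (v.continuous.comp continuous_snd)
  -- nonnegativity of the calibrated cost
  obtain ⟨a, -, hva⟩ := isCompact_univ.exists_isMinOn (Set.univ_nonempty)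
    (v.continuous.continuousOn : ContinuousOn v Set.univ)
  obtain ⟨w, -, hcw⟩ := isCompact_univ.exists_isMinOn (Set.univ_nonempty)
    (hc.continuousOn : ContinuousOn c Set.univ)
  have hbdd : ∀ x' : M, BddBelow (Set.range fun y => v y + c (y, x')) := by
    intro x'
    refine ⟨v a + c w, ?_⟩
    rintro r ⟨y, rfl⟩
    exact add_le_add (hva (Set.mem_univ y)) (hcw (Set.mem_univ (y, x')))
  have hf0 : ∀ z, 0 ≤ f z := by
    intro z
    have h1 : v z.2 ≤ v z.1 + c (z.1, z.2) := by
      rw [hv z.2]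
      exact ciInf_le (hbdd z.2) z.1
    have h2 : (z.1, z.2) = z := rfl
    rw [h2] at h1
    simp only [hfdef]
    linarith
  -- integral of f is zero
  have hcs : ∀ {g : M × M → ℝ}, Continuous g → Integrable g μt := fun {g} hg =>
    hg.integrable_of_hasCompactSupport
      (IsCompact.of_isClosed_subset isCompact_univ (isClosed_tsupport _) (Set.subset_univ _))
  have h1 : ∫ y, v y ∂(μt.map Prod.fst) = ∫ z, v z.1 ∂μt :=
    integral_map measurable_fst.aemeasurable v.continuous.aestronglyMeasurable
  have h2 : ∫ y, v y ∂(μt.map Prod.snd) = ∫ z, v z.2 ∂μt :=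
    integral_map measurable_snd.aemeasurable v.continuous.aestronglyMeasurable
  have hvv : ∫ z, v z.1 ∂μt = ∫ z, v z.2 ∂μt := by rw [← h1, ← h2, hclosed]
  have hIf : ∫ z, f z ∂μt = 0 := by
    have iv1 : Integrable (fun z : M × M => v z.1) μt := hcs (v.continuous.comp continuous_fst)
    have ivc : Integrable c μt := hcs hc
    have iv2 : Integrable (fun z : M × M => v z.2) μt := hcs (v.continuous.comp continuous_snd)
    have : ∫ z, f z ∂μt = (∫ z, (v z.1 + c z) ∂μt) - ∫ z, v z.2 ∂μt :=
      integral_sub (iv1.add ivc) iv2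
    rw [this, integral_add iv1 ivc, hMather, hvv]
    ring
  have hae : f =ᵐ[μt] 0 := (integral_eq_zero_iff_of_nonneg hf0 (hcs hfc)).mp hIf
  set S : Set (M × M) := {z | f z = 0} with hSdef
  have hSm : MeasurableSet S := hfc.measurable (measurableSet_singleton (0 : ℝ))
  have hS0 : μt Sᶜ = 0 := by
    have h := hae
    rw [Filter.EventuallyEq, ae_iff] at h
    simpa [hSdef, Set.compl_setOf] using h
  -- telescoping
  have tele : ∀ (n : ℕ) (p : ℕ → M), ∑ i ∈ Finset.range n, c (p i, p (i + 1)) =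
      (∑ i ∈ Finset.range n, f (p i, p (i + 1))) - v (p 0) + v (p n) := by
    intro n p
    have hsplit : ∑ i ∈ Finset.range n, f (p i, p (i + 1)) =
        (∑ i ∈ Finset.range n, c (p i, p (i + 1)))
          + ∑ i ∈ Finset.range n, (v (p i) - v (p (i + 1))) := by
      rw [← Finset.sum_add_distrib]
      refine Finset.sum_congr rfl fun i _ => ?_
      simp only [hfdef]
      ring
    rw [hsplit, Finset.sum_range_sub' (fun i => v (p i))]
    ring
  have hsum0 : ∀ (n : ℕ) (p : ℕ → M), p 0 = x → p n = x →
      0 ≤ ∑ i ∈ Finset.range n, c (p i, p (i + 1)) := by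
    intro n p h0 hn
    have hnn : 0 ≤ ∑ i ∈ Finset.range n, f (p i, p (i + 1)) :=
      Finset.sum_nonneg fun i _ => hf0 _
    rw [tele n p, h0, hn]
    linarith
  have hbddS : ∀ n : ℕ, BddBelow {r : ℝ | ∃ p : ℕ → M, p 0 = x ∧ p n = x ∧
      r = ∑ i ∈ Finset.range n, c (p i, p (i + 1))} := by
    intro n
    refine ⟨0, ?_⟩
    rintro r ⟨p, h0, hn, rfl⟩
    exact hsum0 n p h0 hn
  have hne : ∀ n : ℕ, {r : ℝ | ∃ p : ℕ → M, p 0 = x ∧ p n = x ∧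
      r = ∑ i ∈ Finset.range n, c (p i, p (i + 1))}.Nonempty := by
    intro n
    exact ⟨∑ i ∈ Finset.range n, c (x, x), fun _ => x, rfl, rfl, by simp⟩
  have hlow : ∀ n, 0 ≤ minChainCost c n x x := by
    intro n
    refine le_csInf (hne n) ?_
    rintro r ⟨p, h0, hn, rfl⟩
    exact hsum0 n p h0 hn
  -- frequently small
  have hfreq : ∀ ε : ℝ, 0 < ε → ∀ N₀ : ℕ, ∃ n, N₀ ≤ n ∧ minChainCost c n x x ≤ ε := by
    intro ε hε N₀
    obtain ⟨δ, hδ, hδε⟩ := Metric.uniformContinuous_iff.mp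
      (CompactSpace.uniformContinuous_of_continuous hfc) (ε / 2) (half_pos hε)
    have hball : μt.map Prod.fst (Metric.ball x δ) ≠ 0 := hx _ (Metric.ball_mem_nhds x hδ)
    obtain ⟨n, hnN, q, hq0, hqn, hqS⟩ := exists_return_chain μt hclosed S hSm hS0
      (Metric.ball x δ) measurableSet_ball hball (max 1 N₀) (le_max_left _ _)
    refine ⟨n, le_trans (le_max_right 1 N₀) hnN, ?_⟩
    have hn1 : 1 ≤ n := le_trans (le_max_left 1 N₀) hnN
    set p : ℕ → M := fun i => if i = 0 then x else if i = n then x else q i with hp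
    have hp0 : p 0 = x := by simp [hp]
    have hpn : p n = x := by
      by_cases h : n = 0 <;> simp [hp, h]
    have hqzero : ∀ i, i < n → f (q i, q (i + 1)) = 0 := fun i hi => hqS i hi
    have hdq0 : dist x (q 0) < δ := by
      rw [dist_comm]
      exact Metric.mem_ball.mp hq0
    have hdqn : dist x (q n) < δ := by
      rw [dist_comm]
      exact Metric.mem_ball.mp hqn
    have hterm : ∀ i, i < n → f (p i, p (i + 1)) ≤
        (if i = 0 then ε / 2 else 0) + (if i = n - 1 then ε / 2 else 0) := by
      intro i hi
      by_cases h0 : i = 0 <;> by_cases h1 : i = n - 1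
      · -- i = 0 = n-1, so n = 1
        subst h0
        have hn' : n = 1 := by omega
        have hpe : p 0 = x ∧ p 1 = x := ⟨hp0, by rw [← hn']; exact hpn⟩
        have h21 : dist x (q 1) < δ := by
          rw [show (1 : ℕ) = n from hn'.symm]
          exact hdqn
        have hd : dist ((x, x) : M × M) (q 0, q 1) < δ := by
          rw [Prod.dist_eq]
          exact max_lt hdq0 h21
        have hc0 : f (q 0, q 1) = 0 := hqzero 0 hi
        have := hδε hd
        rw [Real.dist_eq, hc0, sub_zero] at this
        have habs := le_of_lt (lt_of_abs_lt this)
        simp only [if_pos rfl, if_pos h1]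
        calc f (p 0, p (0 + 1)) = f (x, x) := by rw [hpe.1, show (0:ℕ)+1 = 1 from rfl, hpe.2]
          _ ≤ ε / 2 := habs
          _ ≤ ε / 2 + ε / 2 := by linarith
      · -- i = 0, n ≥ 2
        subst h0
        have h2n : 2 ≤ n := by omega
        have hp1 : p 1 = q 1 := by
          have : (1:ℕ) ≠ n := by omega
          simp [hp, this]
        have hd : dist ((x, q 1) : M × M) (q 0, q 1) < δ := by
          rw [Prod.dist_eq]
          simp only [dist_self]
          exact max_lt hdq0 hδ
        have hc0 : f (q 0, q 1) = 0 := hqzero 0 (by omega)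
        have := hδε hd
        rw [Real.dist_eq, hc0, sub_zero] at this
        have habs := le_of_lt (lt_of_abs_lt this)
        simp only [if_pos rfl, if_neg h1]
        calc f (p 0, p (0 + 1)) = f (x, q 1) := by rw [hp0, show (0:ℕ)+1 = 1 from rfl, hp1]
          _ ≤ ε / 2 := habs
          _ = ε / 2 + 0 := by ring
      · -- i = n - 1 ≥ 1
        have hi1 : i + 1 = n := by omega
        have hpi : p i = q i := by
          have hne0 : i ≠ 0 := h0
          have hnen : i ≠ n := by omega
          simp [hp, hne0, hnen]
        have hpi1 : p (i + 1) = x := by rw [hi1]; exact hpn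
        have hd : dist ((q i, x) : M × M) (q i, q (i + 1)) < δ := by
          rw [Prod.dist_eq]
          simp only [dist_self]
          refine max_lt hδ ?_
          rw [← hi1] at hdqn
          exact hdqn
        have hc0 : f (q i, q (i + 1)) = 0 := hqzero i hi
        have := hδε hd
        rw [Real.dist_eq, hc0, sub_zero] at this
        have habs := le_of_lt (lt_of_abs_lt this)
        simp only [if_neg h0, if_pos h1]
        calc f (p i, p (i + 1)) = f (q i, x) := by rw [hpi, hpi1]
          _ ≤ ε / 2 := habs
          _ = 0 + ε / 2 := by ring
      · -- interior term
        have hpi : p i = q i := by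
          have hnen : i ≠ n := by omega
          simp [hp, h0, hnen]
        have hpi1 : p (i + 1) = q (i + 1) := by
          have hne0 : i + 1 ≠ 0 := by omega
          have hnen : i + 1 ≠ n := by omega
          simp [hp, hne0, hnen]
        rw [hpi, hpi1, hqzero i hi]
        simp only [if_neg h0, if_neg h1]
        norm_num
    have hsumb : ∑ i ∈ Finset.range n, f (p i, p (i + 1)) ≤ ε := by
      calc ∑ i ∈ Finset.range n, f (p i, p (i + 1))
          ≤ ∑ i ∈ Finset.range n,
            ((if i = 0 then ε / 2 else 0) + (if i = n - 1 then ε / 2 else 0)) :=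
            Finset.sum_le_sum fun i hi => hterm i (Finset.mem_range.mp hi)
        _ = ε / 2 + ε / 2 := by
            rw [Finset.sum_add_distrib, Finset.sum_ite_eq' (Finset.range n) 0 (fun _ => ε / 2),
              Finset.sum_ite_eq' (Finset.range n) (n - 1) (fun _ => ε / 2)]
            have m0 : (0 : ℕ) ∈ Finset.range n := Finset.mem_range.mpr (by omega)
            have m1 : n - 1 ∈ Finset.range n := Finset.mem_range.mpr (by omega)
            rw [if_pos m0, if_pos m1]
        _ = ε := by ring
    have hr : ∑ i ∈ Finset.range n, c (p i, p (i + 1)) ≤ ε := by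
      rw [tele n p, hp0, hpn]
      linarith
    exact le_trans (csInf_le (hbddS n) ⟨p, hp0, hpn, rfl⟩) hr
  -- compute the liminf
  rw [peierls, Filter.liminf_eq]
  set T := {a : ℝ | ∀ᶠ n in atTop, a ≤ minChainCost c n x x} with hT
  have h0T : (0 : ℝ) ∈ T := Filter.Eventually.of_forall hlow
  have hub : ∀ ε : ℝ, 0 < ε → ∀ a ∈ T, a ≤ ε := by
    intro ε hε a ha
    rw [hT, Set.mem_setOf_eq, Filter.eventually_atTop] at ha
    obtain ⟨N₀, hN₀⟩ := ha
    obtain ⟨n, hn, hsmall⟩ := hfreq ε hε N₀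
    exact le_trans (hN₀ n hn) hsmall
  have hbA : BddAbove T := ⟨1, fun a ha => hub 1 one_pos a ha⟩
  have hge : (0 : ℝ) ≤ sSup T := le_csSup hbA h0T
  have hle : sSup T ≤ 0 := by
    by_contra hcon
    push_neg at hcon
    have h2 := csSup_le ⟨0, h0T⟩ (hub (sSup T / 2) (by linarith))
    linarith
  linarith
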